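/- For any graph G with n vertices and m edges, the sum of d_i·d_j over all edges {i,j} is at least 4m³/n². -/

import Mathlib

open Finset

private lemma sum_adj_pairs {n : ℕ} (G : SimpleGraph (Fin n)) [DecidableRel G.Adj]
    {M : Type*} [AddCommMonoid M] (F : Fin n → Fin n → M) :
    ∑ p ∈ Finset.univ.filter (fun p : Fin n × Fin n => G.Adj p.1 p.2), F p.1 p.2
      = ∑ i, ∑ j ∈ G.neighborFinset i, F i j := by
  rw [sum_filter, ← Finset.univ_product_univ, Finset.sum_product]
  refine Finset.sum_congr rfl fun i _ => ?_
  rw [SimpleGraph.neighborFinset_eq_filter, sum_filter]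

private lemma sum_adj_pairs_swap {n : ℕ} (G : SimpleGraph (Fin n)) [DecidableRel G.Adj]
    (f : Fin n → ℝ) :
    ∑ p ∈ Finset.univ.filter (fun p : Fin n × Fin n => G.Adj p.1 p.2), f p.2
      = ∑ p ∈ Finset.univ.filter (fun p : Fin n × Fin n => G.Adj p.1 p.2), f p.1 := by
  apply Finset.sum_nbij' (fun p => Prod.swap p) (fun p => Prod.swap p) <;>
    simp [SimpleGraph.adj_comm]

private lemma card_adj_pairs {n : ℕ} (G : SimpleGraph (Fin n)) [DecidableRel G.Adj] :
    ((Finset.univ.filter (fun p : Fin n × Fin n => G.Adj p.1 p.2)).card : ℝ)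
      = 2 * (G.edgeFinset.card : ℝ) := by
  have h1 : (Finset.univ.filter (fun p : Fin n × Fin n => G.Adj p.1 p.2)).card
      = ∑ i, G.degree i := by
    rw [Finset.card_eq_sum_ones, sum_adj_pairs G (fun _ _ => 1)]
    exact Finset.sum_congr rfl fun i _ => by
      rw [← SimpleGraph.card_neighborFinset_eq_degree, Finset.card_eq_sum_ones]
  rw [h1, G.sum_degrees_eq_twice_card_edges]
  push_cast; ring

private lemma sqrt_amgm (x y : ℝ) (hx : 0 ≤ x) (hy : 0 ≤ y) :
    Real.sqrt (x * y) ≤ (x + y) / 2 := by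
  have h : x * y ≤ ((x + y) / 2) ^ 2 := by nlinarith [sq_nonneg (x - y)]
  calc Real.sqrt (x * y) ≤ Real.sqrt (((x + y) / 2) ^ 2) := Real.sqrt_le_sqrt h
    _ = (x + y) / 2 := Real.sqrt_sq (by positivity)

theorem edge_degree_product_lower_bound (n : ℕ) (G : SimpleGraph (Fin n))
    [DecidableRel G.Adj] :
    (1 / 2 : ℝ) *
        ∑ p ∈ Finset.univ.filter (fun p : Fin n × Fin n => G.Adj p.1 p.2),
          (G.degree p.1 : ℝ) * (G.degree p.2 : ℝ) ≥
      4 * (G.edgeFinset.card : ℝ) ^ 3 / (n : ℝ) ^ 2 := by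
  classical
  set S := Finset.univ.filter (fun p : Fin n × Fin n => G.Adj p.1 p.2) with hS
  set d : Fin n → ℝ := fun i => (G.degree i : ℝ) with hd
  set P := ∑ p ∈ S, d p.1 * d p.2 with hP
  set T := ∑ p ∈ S, Real.sqrt (d p.1 * d p.2) with hT
  set U := ∑ p ∈ S, (Real.sqrt (d p.1 * d p.2))⁻¹ with hU
  set c := (S.card : ℝ) with hc
  set m := (G.edgeFinset.card : ℝ) with hm
  have hcm : c = 2 * m := card_adj_pairs G
  have hdiverse : ∀ p ∈ S, (0:ℝ) < d p.1 ∧ (0:ℝ) < d p.2 := by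
    intro p hp
    rw [hS, mem_filter] at hp
    have h1 : 0 < G.degree p.1 := by
      rw [SimpleGraph.degree_pos_iff_exists_adj]; exact ⟨p.2, hp.2⟩
    have h2 : 0 < G.degree p.2 := by
      rw [SimpleGraph.degree_pos_iff_exists_adj]; exact ⟨p.1, hp.2.symm⟩
    constructor
    · show (0:ℝ) < (G.degree p.1 : ℝ); exact_mod_cast h1
    · show (0:ℝ) < (G.degree p.2 : ℝ); exact_mod_cast h2
  have hpos : ∀ p ∈ S, (0:ℝ) < d p.1 * d p.2 := fun p hp =>
    mul_pos (hdiverse p hp).1 (hdiverse p hp).2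
  have hPnn : 0 ≤ P := Finset.sum_nonneg fun p hp => (hpos p hp).le
  have hTnn : 0 ≤ T := Finset.sum_nonneg fun p _ => Real.sqrt_nonneg _
  have hUnn : 0 ≤ U := Finset.sum_nonneg fun p _ => inv_nonneg.mpr (Real.sqrt_nonneg _)
  have hcnn : 0 ≤ c := by rw [hc]; positivity
  -- Cauchy–Schwarz 1 : T ^ 2 ≤ c * P
  have hTP : T ^ 2 ≤ c * P := by
    have := Finset.sum_sq_le_sum_mul_sum_of_sq_eq_mul S
      (r := fun p => Real.sqrt (d p.1 * d p.2))
      (f := fun _ => (1:ℝ)) (g := fun p => d p.1 * d p.2)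
      (fun _ _ => zero_le_one) (fun p hp => (hpos p hp).le)
      (fun p hp => by rw [Real.sq_sqrt (hpos p hp).le, one_mul])
    simpa [hc, hP, hT] using this
  -- Cauchy–Schwarz 2 : c ^ 2 ≤ T * U
  have hcTU : c ^ 2 ≤ T * U := by
    have := Finset.sum_sq_le_sum_mul_sum_of_sq_eq_mul S
      (r := fun _ => (1:ℝ))
      (f := fun p => Real.sqrt (d p.1 * d p.2))
      (g := fun p => (Real.sqrt (d p.1 * d p.2))⁻¹)
      (fun p _ => Real.sqrt_nonneg _)
      (fun p _ => inv_nonneg.mpr (Real.sqrt_nonneg _))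
      (fun p hp => by
        have h := Real.sqrt_pos.mpr (hpos p hp)
        rw [one_pow, mul_inv_cancel₀ h.ne'])
    simpa [hc, hT, hU] using this
  -- U ≤ n
  have hA : ∑ p ∈ S, (d p.1)⁻¹ ≤ (n : ℝ) := by
    rw [hS, sum_adj_pairs G (fun i _ => (d i)⁻¹)]
    have step : ∀ i ∈ (univ : Finset (Fin n)),
        ∑ _j ∈ G.neighborFinset i, (d i)⁻¹ ≤ 1 := by
      intro i _
      rw [Finset.sum_const, nsmul_eq_mul, SimpleGraph.card_neighborFinset_eq_degree]
      rcases eq_or_ne (G.degree i) 0 with h | h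
      · simp [hd, h]
      · have : d i ≠ 0 := by simp [hd, h]
        rw [show ((G.degree i : ℝ)) = d i from rfl, mul_inv_cancel₀ this]
    calc ∑ i, ∑ _j ∈ G.neighborFinset i, (d i)⁻¹ ≤ ∑ _i : Fin n, (1:ℝ) :=
          Finset.sum_le_sum step
      _ = n := by simp
  have hUn : U ≤ (n : ℝ) := by
    have hstep : U ≤ ∑ p ∈ S, ((d p.1)⁻¹ + (d p.2)⁻¹) / 2 := by
      refine Finset.sum_le_sum fun p hp => ?_
      obtain ⟨h1, h2⟩ := hdiverse p hp
      have : (Real.sqrt (d p.1 * d p.2))⁻¹ = Real.sqrt ((d p.1)⁻¹ * (d p.2)⁻¹) := by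
        rw [← Real.sqrt_inv, mul_inv]
      rw [this]
      exact sqrt_amgm _ _ (by positivity) (by positivity)
    have hsplit : ∑ p ∈ S, ((d p.1)⁻¹ + (d p.2)⁻¹) / 2 = ∑ p ∈ S, (d p.1)⁻¹ := by
      rw [← Finset.sum_div, Finset.sum_add_distrib, hS,
        sum_adj_pairs_swap G (fun i => (d i)⁻¹)]
      ring
    calc U ≤ _ := hstep
      _ = ∑ p ∈ S, (d p.1)⁻¹ := hsplit
      _ ≤ (n : ℝ) := hA
  -- combine
  rcases eq_or_ne S.card 0 with hc0 | hc0
  · have hm0 : m = 0 := by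
      have : c = 0 := by rw [hc, hc0]; norm_num
      rw [this] at hcm; linarith
    have hSempty : S = ∅ := Finset.card_eq_zero.mp hc0
    rw [hm0, hP, hSempty]
    simp
  · have hcpos : 0 < c := by
      rw [hc]; exact_mod_cast Nat.pos_of_ne_zero hc0
    have hnpos : (0:ℝ) < n := by
      obtain ⟨p, _⟩ := Finset.card_pos.mp (Nat.pos_of_ne_zero hc0)
      exact_mod_cast p.1.pos
    have key : c ^ 3 ≤ P * (n : ℝ) ^ 2 := by
      have h4 : c ^ 4 ≤ c * P * (n : ℝ) ^ 2 := by
        calc c ^ 4 = (c ^ 2) ^ 2 := by ring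
          _ ≤ (T * U) ^ 2 := pow_le_pow_left₀ (sq_nonneg c) hcTU 2
          _ = T ^ 2 * U ^ 2 := by ring
          _ ≤ (c * P) * U ^ 2 := mul_le_mul_of_nonneg_right hTP (sq_nonneg U)
          _ ≤ (c * P) * (n : ℝ) ^ 2 :=
            mul_le_mul_of_nonneg_left (pow_le_pow_left₀ hUnn hUn 2)
              (mul_nonneg hcnn hPnn)
      have := le_of_mul_le_mul_left (by linarith [h4] : c * c ^ 3 ≤ c * (P * (n:ℝ)^2)) hcpos
      exact this
    rw [ge_iff_le, div_le_iff₀ (by positivity : (0:ℝ) < (n:ℝ)^2)]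
    rw [hcm] at key
    nlinarith [key]
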